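/- (Theorem 3.4) Let ω ∈ (0,1) and let K be an n×n complex matrix that is diagonalizable with purely imaginary spectrum, i.e. K = QΓQ⁻¹ for some invertible complex matrix Q and complex diagonal matrix Γ all of whose diagonal entries have zero real part. Set A := I_{mn} − (Iinv·D) ⊗ K and P(ω) := I_{mn} − (S(ω)·D) ⊗ K, where ⊗ is the Kronecker product, and assume A and P(ω) are invertible. Then the polynomial (X − 1)^{n(m−1)} divides the characteristic polynomial of P(ω)⁻¹A (so at most n eigenvalues differ from 1), and every complex eigenvalue λ of P(ω)⁻¹A lies in the annulus ω/(2−ω) ≤ |λ − 2/(2−ω)| ≤ ω/((2−ω)(1−ω)). -/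

import Mathlib

open Matrix

/-- The sinc integrand `sin(πt)/(πt)`, extended by the value 1 at `t = 0`. -/
noncomputable def sincFn (t : ℝ) : ℝ :=
  if t = 0 then 1 else Real.sin (Real.pi * t) / (Real.pi * t)

/-- The `m × m` Toeplitz matrix `Iinv(k,l) = 1/2 + ∫₀^{k-l} sin(πt)/(πt) dt`. -/
noncomputable def IinvMat (m : ℕ) : Matrix (Fin m) (Fin m) ℝ :=
  fun k l => 1 / 2 + ∫ t in (0 : ℝ)..((k : ℝ) - (l : ℝ)), sincFn t

/-- The skew-symmetric part `S = (Iinv - Iinvᵀ)/2`. -/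
noncomputable def Smat (m : ℕ) : Matrix (Fin m) (Fin m) ℝ :=
  (2 : ℝ)⁻¹ • (IinvMat m - (IinvMat m)ᵀ)

/-- The all-ones vector `e ∈ ℝ^m`. -/
def eVec (m : ℕ) : Fin m → ℝ := fun _ => 1

/-! ### Auxiliary lemmas -/

lemma sincFn_neg (t : ℝ) : sincFn (-t) = sincFn t := by
  unfold sincFn
  rcases eq_or_ne t 0 with h | h
  · simp [h]
  · rw [if_neg (neg_ne_zero.mpr h), if_neg h, mul_neg, Real.sin_neg, neg_div_neg_eq]

lemma integral_sincFn_neg (x : ℝ) :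
    (∫ t in (0:ℝ)..(-x), sincFn t) = - ∫ t in (0:ℝ)..x, sincFn t := by
  have h : (∫ t in (0:ℝ)..x, sincFn (-t)) = ∫ t in (-x)..(-(0:ℝ)), sincFn t :=
    intervalIntegral.integral_comp_neg (a := (0:ℝ)) (b := x) sincFn
  simp only [sincFn_neg, neg_zero] at h
  rw [h, intervalIntegral.integral_symm]

lemma IinvMat_add_symm (m : ℕ) (k l : Fin m) :
    IinvMat m k l + IinvMat m l k = 1 := by
  unfold IinvMat
  have h : ((l:ℝ) - (k:ℝ)) = -(((k:ℝ) - (l:ℝ))) := by ring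
  rw [h, integral_sincFn_neg]
  ring

open Polynomial in
lemma eval_charpoly_det {ι : Type*} [Fintype ι] [DecidableEq ι] (M : Matrix ι ι ℂ) (x : ℂ) :
    M.charpoly.eval x = (x • (1 : Matrix ι ι ℂ) - M).det := by
  rw [Matrix.charpoly, ← Polynomial.coe_evalRingHom, RingHom.map_det]
  congr 1
  ext i j
  rcases eq_or_ne i j with h | h
  · subst h
    simp [Matrix.charmatrix_apply, Matrix.one_apply]
  · simp [Matrix.charmatrix_apply, Matrix.one_apply, h, Matrix.diagonal_apply]

open Polynomial in
lemma charpoly_one_add {ι : Type*} [Fintype ι] [DecidableEq ι] (M : Matrix ι ι ℂ) :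
    (1 + M).charpoly = M.charpoly.comp (X - 1) := by
  apply Polynomial.funext
  intro r
  rw [Polynomial.eval_comp, eval_charpoly_det, eval_charpoly_det]
  simp only [Polynomial.eval_sub, Polynomial.eval_X, Polynomial.eval_one]
  congr 1
  rw [sub_smul, one_smul]
  abel

lemma det_smul_one_sub_mul {α β : Type*} [Fintype α] [DecidableEq α] [Fintype β]
    (A : Matrix α β ℂ) (B : Matrix β α ℂ) {r : ℂ} (hr : r ≠ 0) :
    (r • (1 : Matrix α α ℂ) - A * B).det
      = r ^ (Fintype.card α) * (1 + A * ((-r⁻¹) • B)).det := by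
  have h1 : r • (1 : Matrix α α ℂ) - A * B = r • (1 + A * ((-r⁻¹) • B)) := by
    rw [smul_add, Matrix.mul_smul, smul_smul, mul_neg, mul_inv_cancel₀ hr, neg_smul, one_smul,
      ← sub_eq_add_neg]
  rw [h1, Matrix.det_smul]

open Polynomial in
lemma charpoly_mul_X_pow {ι κ : Type*} [Fintype ι] [Fintype κ] [DecidableEq ι] [DecidableEq κ]
    [Nonempty ι] [Nonempty κ] (U : Matrix ι κ ℂ) (V : Matrix κ ι ℂ) :
    (U * V).charpoly * X ^ (Fintype.card κ)
      = X ^ (Fintype.card ι) * (V * U).charpoly := by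
  apply Polynomial.funext
  intro r
  simp only [Polynomial.eval_mul, Polynomial.eval_pow, Polynomial.eval_X, eval_charpoly_det]
  rcases eq_or_ne r 0 with hr | hr
  · simp [hr, zero_pow, Fintype.card_ne_zero]
  · rw [det_smul_one_sub_mul U V hr, det_smul_one_sub_mul V U hr]
    rw [Matrix.det_one_add_mul_comm U ((-r⁻¹) • V)]
    have h2 : ((-r⁻¹) • V) * U = V * ((-r⁻¹) • U) := by
      rw [Matrix.smul_mul, Matrix.mul_smul]
    rw [h2]
    ring

open Kronecker in
lemma kron_diag_mulVec {m n : ℕ} (M : Matrix (Fin m) (Fin m) ℂ) (Γ : Fin n → ℂ)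
    (η : Fin m × Fin n → ℂ) (k : Fin m) (j : Fin n) :
    ((M ⊗ₖ Matrix.diagonal Γ) *ᵥ η) (k, j)
      = Γ j * ((M *ᵥ fun l => η (l, j)) k) := by
  simp only [Matrix.mulVec, dotProduct, Fintype.sum_prod_type,
    Matrix.kroneckerMap_apply, Matrix.diagonal_apply, ite_mul, zero_mul, mul_ite, mul_zero,
    Finset.sum_ite_eq, Finset.mem_univ, if_true, Finset.mul_sum]
  exact Finset.sum_congr rfl fun l _ => by ring

lemma annulus_est (ω a t : ℝ) (hω0 : 0 < ω) (hω1 : ω < 1) (ht : t ≠ 0) :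
    ω / (2-ω) ≤ ω * Real.sqrt (a^2+t^2) / ((2-ω) * Real.sqrt (a^2 + ((1-ω)*t)^2))
    ∧ ω * Real.sqrt (a^2+t^2) / ((2-ω) * Real.sqrt (a^2 + ((1-ω)*t)^2))
      ≤ ω / ((2-ω)*(1-ω)) := by
  have h2ω : (0:ℝ) < 2 - ω := by linarith
  have h1ω : (0:ℝ) < 1 - ω := by linarith
  have hx : ((1-ω)*t)^2 > 0 := by positivity
  have ht2 : t^2 > 0 := by positivity
  have hS2 : (0:ℝ) < a^2 + ((1-ω)*t)^2 := by nlinarith [sq_nonneg a]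
  have hS1 : (0:ℝ) < a^2 + t^2 := by nlinarith [sq_nonneg a]
  have hr2 : 0 < Real.sqrt (a^2 + ((1-ω)*t)^2) := Real.sqrt_pos.mpr hS2
  have hr1 : 0 < Real.sqrt (a^2 + t^2) := Real.sqrt_pos.mpr hS1
  have hA : Real.sqrt (a^2 + ((1-ω)*t)^2) ≤ Real.sqrt (a^2+t^2) := by
    apply Real.sqrt_le_sqrt
    nlinarith [mul_nonneg (mul_nonneg hω0.le h2ω.le) ht2.le]
  have hB : (1-ω) * Real.sqrt (a^2+t^2) ≤ Real.sqrt (a^2 + ((1-ω)*t)^2) := by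
    have h1 : (1-ω) * Real.sqrt (a^2+t^2) = Real.sqrt ((1-ω)^2 * (a^2+t^2)) := by
      rw [Real.sqrt_mul (sq_nonneg _), Real.sqrt_sq h1ω.le]
    rw [h1]
    apply Real.sqrt_le_sqrt
    nlinarith [mul_nonneg (mul_nonneg hω0.le h2ω.le) (sq_nonneg a)]
  constructor
  · rw [div_le_div_iff₀ h2ω (mul_pos h2ω hr2)]
    nlinarith [mul_le_mul_of_nonneg_left hA (mul_nonneg hω0.le h2ω.le)]
  · rw [div_le_div_iff₀ (mul_pos h2ω hr2) (mul_pos h2ω h1ω)]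
    nlinarith [mul_le_mul_of_nonneg_left hB (mul_nonneg hω0.le h2ω.le)]

open Polynomial Kronecker in
theorem stmt13 (m n : ℕ) (hm : 1 ≤ m) (hn : 1 ≤ n) (d : Fin m → ℝ) (hd : ∀ j, 0 < d j)
    (ω : ℝ) (hω : ω ∈ Set.Ioo (0 : ℝ) 1)
    (K Q : Matrix (Fin n) (Fin n) ℂ) (Γ : Fin n → ℂ) (hQ : IsUnit Q)
    (hΓ : ∀ j, (Γ j).re = 0) (hK : K = Q * Matrix.diagonal Γ * Q⁻¹) :
    let Dc : Matrix (Fin m) (Fin m) ℂ := (Matrix.diagonal d).map Complex.ofReal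
    let Sω : Matrix (Fin m) (Fin m) ℂ :=
      (IinvMat m - (ω / 2) • Matrix.vecMulVec (eVec m) (eVec m)).map Complex.ofReal
    let A : Matrix (Fin m × Fin n) (Fin m × Fin n) ℂ :=
      1 - ((IinvMat m).map Complex.ofReal * Dc) ⊗ₖ K
    let P : Matrix (Fin m × Fin n) (Fin m × Fin n) ℂ := 1 - (Sω * Dc) ⊗ₖ K
    IsUnit A → IsUnit P →
      ((X - 1) ^ (n * (m - 1)) ∣ (P⁻¹ * A).charpoly) ∧
      ∀ (lam : ℂ) (ξ : Fin m × Fin n → ℂ), ξ ≠ 0 →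
        (P⁻¹ * A).mulVec ξ = lam • ξ →
        ω / (2 - ω) ≤ ‖lam - 2 / (2 - (ω : ℂ))‖ ∧
        ‖lam - 2 / (2 - (ω : ℂ))‖ ≤ ω / ((2 - ω) * (1 - ω)) := by
  intro Dc Sω A P hA hP
  obtain ⟨hω0, hω1⟩ := hω
  have h2ω : (0:ℝ) < 2 - ω := by linarith
  have h1ω : (0:ℝ) < 1 - ω := by linarith
  have hann : ω/(2-ω) ≤ ω/((2-ω)*(1-ω)) := by
    rw [div_le_div_iff₀ h2ω (mul_pos h2ω h1ω)]
    nlinarith [mul_nonneg (mul_nonneg hω0.le h2ω.le) hω0.le]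
  have hDc : Dc = Matrix.diagonal (fun k => (d k : ℂ)) := by
    rw [show Dc = (Matrix.diagonal d).map Complex.ofReal from rfl,
      Matrix.diagonal_map (by simp)]
  have hSωapp : ∀ k l, Sω k l = ((IinvMat m k l : ℝ) : ℂ) - (ω:ℂ)/2 := by
    intro k l
    show (Complex.ofReal _) = _
    simp only [Matrix.sub_apply, Matrix.smul_apply, Matrix.vecMulVec_apply, eVec,
      mul_one, smul_eq_mul]
    push_cast
    ring
  have hPdet := (Matrix.isUnit_iff_isUnit_det P).mp hP
  have hPP' : P⁻¹ * P = 1 := Matrix.nonsing_inv_mul P hPdet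
  have hPP : P * P⁻¹ = 1 := Matrix.mul_nonsing_inv P hPdet
  -- rank-one factorization of A - P
  set W1 : Matrix (Fin m × Fin n) (Fin 1 × Fin n) ℂ :=
    (fun _ _ => (1:ℂ) : Matrix (Fin m) (Fin 1) ℂ) ⊗ₖ (1 : Matrix (Fin n) (Fin n) ℂ) with hW1
  set W2 : Matrix (Fin 1 × Fin n) (Fin m × Fin n) ℂ :=
    (fun _ l => (d l : ℂ) : Matrix (Fin 1) (Fin m) ℂ) ⊗ₖ K with hW2
  have hW12 : ∀ (ki : Fin m × Fin n) (lj : Fin m × Fin n),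
      (W1 * W2) ki lj = (d lj.1 : ℂ) * K ki.2 lj.2 := by
    rintro ⟨k, i⟩ ⟨l, j⟩
    simp only [hW1, hW2, Matrix.mul_apply, Matrix.kroneckerMap_apply, Fintype.sum_prod_type,
      Finset.sum_const, Finset.card_univ, Fintype.card_fin, one_smul, one_mul]
    simp [Matrix.kroneckerMap, Matrix.of_apply, Matrix.one_apply, ite_mul, zero_mul, Finset.sum_ite_eq, Finset.mul_sum]
  have hAP : A = P - ((ω:ℂ)/2) • (W1 * W2) := by
    ext ⟨k, i⟩ ⟨l, j⟩
    show (1 : Matrix (Fin m × Fin n) (Fin m × Fin n) ℂ) (k,i) (l,j)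
        - (((IinvMat m).map Complex.ofReal * Dc) ⊗ₖ K) (k,i) (l,j) = _
    rw [Matrix.sub_apply, Matrix.smul_apply, hW12 (k,i) (l,j)]
    show _ = (1 : Matrix (Fin m × Fin n) (Fin m × Fin n) ℂ) (k,i) (l,j)
        - ((Sω * Dc) ⊗ₖ K) (k,i) (l,j) - _
    rw [hDc, Matrix.kroneckerMap_apply, Matrix.kroneckerMap_apply,
      Matrix.mul_diagonal, Matrix.mul_diagonal, hSωapp, Matrix.map_apply, smul_eq_mul]
    push_cast
    ring
  set Um : Matrix (Fin m × Fin n) (Fin 1 × Fin n) ℂ := (-((ω:ℂ)/2)) • (P⁻¹ * W1) with hUm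
  have hPA : P⁻¹ * A = 1 + Um * W2 := by
    rw [hAP, Matrix.mul_sub, hPP', Matrix.mul_smul, hUm, Matrix.smul_mul, Matrix.mul_assoc,
      neg_smul, ← sub_eq_add_neg]
  haveI : NeZero m := ⟨by omega⟩
  haveI : NeZero n := ⟨by omega⟩
  have hnle : n ≤ m * n := Nat.le_mul_of_pos_left n (by omega)
  have hsyl := charpoly_mul_X_pow Um W2
  rw [show Fintype.card (Fin 1 × Fin n) = n by simp,
    show Fintype.card (Fin m × Fin n) = m * n by simp] at hsyl
  have hfact : (Um * W2).charpoly = X ^ (m*n - n) * (W2 * Um).charpoly := by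
    have hXn : (X : ℂ[X]) ^ n ≠ 0 := pow_ne_zero _ Polynomial.X_ne_zero
    apply mul_right_cancel₀ hXn
    rw [hsyl, mul_right_comm, ← pow_add, Nat.sub_add_cancel hnle]
  have hchar : (P⁻¹ * A).charpoly
      = (X - 1) ^ (m*n - n) * ((W2 * Um).charpoly.comp (X - 1)) := by
    rw [hPA, charpoly_one_add, hfact]
    simp [Polynomial.mul_comp, Polynomial.pow_comp, Polynomial.X_comp]
  constructor
  · rw [hchar, show n * (m - 1) = m * n - n by cases m with
      | zero => omega
      | succ m' => rw [Nat.succ_sub_one, Nat.succ_mul, Nat.add_sub_cancel, Nat.mul_comm]]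
    exact Dvd.intro _ rfl
  intro lam ξ hξ hev
  -- Q conjugation setup
  have hQdet := (Matrix.isUnit_iff_isUnit_det Q).mp hQ
  have hQQ : Q * Q⁻¹ = 1 := Matrix.mul_nonsing_inv Q hQdet
  have hQQ' : Q⁻¹ * Q = 1 := Matrix.nonsing_inv_mul Q hQdet
  set G : Matrix (Fin n) (Fin n) ℂ := Matrix.diagonal Γ with hG
  set IC : Matrix (Fin m) (Fin m) ℂ := (IinvMat m).map Complex.ofReal with hICdef
  set MA : Matrix (Fin m) (Fin m) ℂ := IC * Dc with hMAdef
  set MP : Matrix (Fin m) (Fin m) ℂ := Sω * Dc with hMPdef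
  set QL : Matrix (Fin m × Fin n) (Fin m × Fin n) ℂ :=
    (1 : Matrix (Fin m) (Fin m) ℂ) ⊗ₖ Q with hQL
  set QR : Matrix (Fin m × Fin n) (Fin m × Fin n) ℂ :=
    (1 : Matrix (Fin m) (Fin m) ℂ) ⊗ₖ Q⁻¹ with hQR
  have hQLQR : QL * QR = 1 := by
    rw [hQL, hQR, ← Matrix.mul_kronecker_mul, Matrix.one_mul, hQQ, Matrix.one_kronecker_one]
  have hQRQL : QR * QL = 1 := by
    rw [hQL, hQR, ← Matrix.mul_kronecker_mul, Matrix.one_mul, hQQ', Matrix.one_kronecker_one]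
  have hconj : ∀ (M : Matrix (Fin m) (Fin m) ℂ),
      QR * (1 - M ⊗ₖ K) = (1 - M ⊗ₖ G) * QR := by
    intro M
    rw [Matrix.mul_sub, Matrix.sub_mul, Matrix.mul_one, Matrix.one_mul]
    congr 1
    rw [hK, hQR, ← Matrix.mul_kronecker_mul, ← Matrix.mul_kronecker_mul, Matrix.one_mul,
      Matrix.mul_one, ← Matrix.mul_assoc, ← Matrix.mul_assoc, hQQ', Matrix.one_mul]
  have hev' : A *ᵥ ξ = lam • (P *ᵥ ξ) := by
    conv_lhs => rw [show A = P * (P⁻¹ * A) by rw [← Matrix.mul_assoc, hPP, Matrix.one_mul]]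
    rw [← Matrix.mulVec_mulVec, hev, Matrix.mulVec_smul]
  set η : Fin m × Fin n → ℂ := QR *ᵥ ξ with hη
  have hημ : QL *ᵥ η = ξ := by
    rw [hη, Matrix.mulVec_mulVec, hQLQR, Matrix.one_mulVec]
  have hη0 : η ≠ 0 := by
    intro h
    exact hξ (by rw [← hημ, h, Matrix.mulVec_zero])
  have heq2 : (1 - MA ⊗ₖ G) *ᵥ η = lam • ((1 - MP ⊗ₖ G) *ᵥ η) := by
    have h1 : QR *ᵥ (A *ᵥ ξ) = lam • (QR *ᵥ (P *ᵥ ξ)) := by rw [hev', Matrix.mulVec_smul]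
    rw [Matrix.mulVec_mulVec, Matrix.mulVec_mulVec,
      show QR * A = QR * (1 - MA ⊗ₖ K) from rfl,
      show QR * P = QR * (1 - MP ⊗ₖ K) from rfl,
      hconj MA, hconj MP, ← Matrix.mulVec_mulVec, ← Matrix.mulVec_mulVec] at h1
    exact h1
  obtain ⟨⟨k0, j⟩, hk0⟩ : ∃ q, η q ≠ 0 := Function.ne_iff.mp hη0
  set x : Fin m → ℂ := fun l => η (l, j) with hx
  have hx0 : x k0 ≠ 0 := hk0
  set γ : ℂ := Γ j with hγdef
  have hstar : ∀ k, x k - γ * ((MA *ᵥ x) k) = lam * (x k - γ * ((MP *ᵥ x) k)) := by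
    intro k
    have h := congrFun heq2 (k, j)
    rw [Matrix.sub_mulVec, Matrix.sub_mulVec, Matrix.one_mulVec] at h
    simp only [Pi.sub_apply, Pi.smul_apply, smul_eq_mul, hG, kron_diag_mulVec] at h
    exact h
  -- scalar quantities
  set dx : Fin m → ℂ := fun l => (d l : ℂ) * x l with hdx
  set F : Fin m → ℂ := IC *ᵥ dx with hFdef
  have hMA : ∀ k, (MA *ᵥ x) k = F k := by
    intro k
    rw [hMAdef, ← Matrix.mulVec_mulVec, hFdef]
    congr 1
    funext l
    rw [hDc, Matrix.mulVec_diagonal]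
  set c : ℂ := ∑ l, dx l with hc
  have hF : ∀ k, F k = ∑ l, IC k l * dx l := fun k => rfl
  have hMP : ∀ k, (MP *ᵥ x) k = F k - ((ω:ℂ)/2) * c := by
    intro k
    have h1 : (MP *ᵥ x) k = (Sω *ᵥ dx) k := by
      rw [hMPdef, ← Matrix.mulVec_mulVec]
      congr 1
      funext l
      rw [hDc, Matrix.mulVec_diagonal]
    rw [h1]
    show ∑ l, Sω k l * dx l = _
    rw [hF, hc, Finset.mul_sum, ← Finset.sum_sub_distrib]
    refine Finset.sum_congr rfl fun l _ => ?_
    rw [hSωapp]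
    show ((IinvMat m k l : ℂ) - (ω:ℂ)/2) * dx l = IC k l * dx l - (ω:ℂ)/2 * dx l
    rw [show IC k l = ((IinvMat m k l : ℝ) : ℂ) from rfl]
    ring
  set Nr : ℝ := ∑ k, d k * Complex.normSq (x k) with hNrdef
  set z : ℂ := ∑ k, (starRingEnd ℂ) (x k) * (d k : ℂ) * F k with hzdef
  set cs : ℂ := ∑ k, (starRingEnd ℂ) (x k) * (d k : ℂ) with hcsdef
  have hNc : ∑ k, (starRingEnd ℂ) (x k) * (d k:ℂ) * x k = (Nr : ℂ) := by
    rw [hNrdef]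
    push_cast
    refine Finset.sum_congr rfl fun k _ => ?_
    rw [Complex.normSq_eq_conj_mul_self]
    ring
  have hNrpos : 0 < Nr := by
    refine Finset.sum_pos' (fun k _ => mul_nonneg (hd k).le (Complex.normSq_nonneg _))
      ⟨k0, Finset.mem_univ _, mul_pos (hd k0) (Complex.normSq_pos.mpr hx0)⟩
  -- the scalar eigen-relation
  have hscal : (Nr:ℂ) - γ * z = lam * ((Nr:ℂ) - γ * (z - ((ω:ℂ)/2) * c * cs)) := by
    have h1 : ∀ k, (starRingEnd ℂ) (x k) * (d k:ℂ) * x k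
          - γ * ((starRingEnd ℂ) (x k) * (d k:ℂ) * F k)
        = lam * ((starRingEnd ℂ) (x k) * (d k:ℂ) * x k
          - γ * ((starRingEnd ℂ) (x k) * (d k:ℂ) * F k
            - ((ω:ℂ)/2) * c * ((starRingEnd ℂ) (x k) * (d k:ℂ)))) := by
      intro k
      have h := hstar k
      rw [hMA k, hMP k] at h
      calc (starRingEnd ℂ) (x k) * (d k:ℂ) * x k
            - γ * ((starRingEnd ℂ) (x k) * (d k:ℂ) * F k)
          = (starRingEnd ℂ) (x k) * (d k:ℂ) * (x k - γ * F k) := by ring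
        _ = (starRingEnd ℂ) (x k) * (d k:ℂ) * (lam * (x k - γ * (F k - ((ω:ℂ)/2) * c))) := by
            rw [h]
        _ = _ := by ring
    have h2 := Finset.sum_congr rfl (fun k (_ : k ∈ Finset.univ) => h1 k)
    rw [Finset.sum_sub_distrib, ← Finset.mul_sum, hNc, ← Finset.mul_sum] at h2
    rw [h2]
    congr 1
    rw [Finset.sum_sub_distrib, ← Finset.mul_sum, Finset.sum_sub_distrib, ← Finset.mul_sum,
      hNc, hzdef, hcsdef]
  -- symmetry: z + conj z = cs * c
  have hIsum : ∀ k l : Fin m, IC k l + IC l k = 1 := by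
    intro k l
    rw [show IC k l = ((IinvMat m k l : ℝ) : ℂ) from rfl,
      show IC l k = ((IinvMat m l k : ℝ) : ℂ) from rfl]
    rw [← Complex.ofReal_add, IinvMat_add_symm, Complex.ofReal_one]
  have hzz : z + (starRingEnd ℂ) z = cs * c := by
    have hz2 : z = ∑ k, ∑ l, (starRingEnd ℂ) (x k) * (d k:ℂ) * IC k l * dx l := by
      rw [hzdef]
      refine Finset.sum_congr rfl fun k _ => ?_
      rw [hF k, Finset.mul_sum]
      exact Finset.sum_congr rfl fun l _ => by ring
    have hz3 : (starRingEnd ℂ) z = ∑ k, ∑ l, (starRingEnd ℂ) (x k) * (d k:ℂ) * IC l k * dx l := by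
      rw [hz2, map_sum]
      rw [Finset.sum_comm]
      refine Finset.sum_congr rfl fun k _ => ?_
      rw [map_sum]
      refine Finset.sum_congr rfl fun l _ => ?_
      simp only [_root_.map_mul, Complex.conj_conj, hdx, hICdef, Matrix.map_apply,
        Complex.conj_ofReal]
      ring
    rw [hz3, hz2, ← Finset.sum_add_distrib]
    have : ∀ k, (∑ l, (starRingEnd ℂ) (x k) * (d k:ℂ) * IC k l * dx l)
        + (∑ l, (starRingEnd ℂ) (x k) * (d k:ℂ) * IC l k * dx l)
        = ∑ l, (starRingEnd ℂ) (x k) * (d k:ℂ) * dx l := by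
      intro k
      rw [← Finset.sum_add_distrib]
      refine Finset.sum_congr rfl fun l _ => ?_
      have h4 := hIsum k l
      calc (starRingEnd ℂ) (x k) * (d k:ℂ) * IC k l * dx l
            + (starRingEnd ℂ) (x k) * (d k:ℂ) * IC l k * dx l
          = (starRingEnd ℂ) (x k) * (d k:ℂ) * dx l * (IC k l + IC l k) := by ring
        _ = _ := by rw [h4, mul_one]
    rw [Finset.sum_congr rfl fun k _ => this k, hcsdef, hc, Finset.sum_mul_sum]
  have hcsc : cs * c = ((Complex.normSq c : ℝ) : ℂ) := by
    have hcs' : cs = (starRingEnd ℂ) c := by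
      rw [hcsdef, hc, map_sum]
      refine Finset.sum_congr rfl fun k _ => ?_
      simp only [hdx, _root_.map_mul, Complex.conj_ofReal]
      ring
    rw [hcs', Complex.normSq_eq_conj_mul_self]
  have hre : 2 * z.re = Complex.normSq c := by
    have h6 := congrArg Complex.re (hzz.trans hcsc)
    simpa [Complex.add_re, Complex.conj_re, two_mul] using h6
  -- real decomposition
  have hγre : γ.re = 0 := hΓ j
  set β : ℝ := γ.im with hβdef
  have hγ : γ = (β:ℂ) * Complex.I := by
    apply Complex.ext <;> simp [hβdef, hγre]
  set a : ℝ := Nr + β * z.im with hadef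
  set t : ℝ := β * z.re with htdef
  have hnum : (Nr:ℂ) - γ * z = (a:ℂ) - (t:ℂ) * Complex.I := by
    rw [hγ]
    apply Complex.ext <;>
      simp [hadef, htdef, Complex.mul_re, Complex.mul_im, Complex.sub_re, Complex.sub_im] <;>
      ring
  have hden : (Nr:ℂ) - γ * (z - ((ω:ℂ)/2) * c * cs) = (a:ℂ) - (1-(ω:ℂ)) * (t:ℂ) * Complex.I := by
    have h7 : ((ω:ℂ)/2) * c * cs = ((ω * z.re : ℝ) : ℂ) := by
      rw [mul_assoc, mul_comm c cs, hcsc, ← hre]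
      push_cast
      ring
    rw [h7, hγ]
    apply Complex.ext <;>
      simp [hadef, htdef, Complex.mul_re, Complex.mul_im, Complex.sub_re, Complex.sub_im] <;>
      ring
  have hlam : (a:ℂ) - (t:ℂ) * Complex.I
      = lam * ((a:ℂ) - (1-(ω:ℂ)) * (t:ℂ) * Complex.I) := by
    rw [← hnum, ← hden]; exact hscal
  have h2c : (2 : ℂ) - (ω:ℂ) ≠ 0 := by
    rw [show (2:ℂ) - (ω:ℂ) = ((2 - ω : ℝ) : ℂ) by push_cast; ring]
    exact Complex.ofReal_ne_zero.mpr (ne_of_gt h2ω)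
  by_cases ht : t = 0
  · -- in this case lam = 1
    have hlam1 : lam = 1 := by
      by_cases ha : a = 0
      · rcases mul_eq_zero.mp (htdef ▸ ht) with hβ0 | hp0
        · -- γ = 0
          have hγ0 : γ = 0 := by rw [hγ, hβ0]; simp
          have h := hstar k0
          rw [hγ0] at h
          simp only [zero_mul, sub_zero] at h
          have h8 : (lam - 1) * x k0 = 0 := by linear_combination - h
          rcases mul_eq_zero.mp h8 with h9 | h9
          · exact sub_eq_zero.mp h9
          · exact absurd h9 hx0
        · -- c = 0 : injectivity rescue
          have hc0 : c = 0 := by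
            have h10 : Complex.normSq c = 0 := by rw [← hre, hp0]; ring
            exact Complex.normSq_eq_zero.mp h10
          have hw : ∀ k1, x k1 - γ * F k1 = lam * (x k1 - γ * F k1) := by
            intro k1
            have h := hstar k1
            rw [hMA k1, hMP k1, hc0, mul_zero, sub_zero] at h
            exact h
          by_cases hwz : ∀ k1, x k1 - γ * F k1 = 0
          · exfalso
            set ζ : Fin m × Fin n → ℂ := fun q => if q.2 = j then x q.1 else 0 with hζ
            have hζ0 : ζ ≠ 0 := by
              intro h
              apply hx0
              have := congrFun h (k0, j)
              simpa [hζ] using this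
            have hmv : (1 - MP ⊗ₖ G) *ᵥ ζ = 0 := by
              funext ⟨k1, i⟩
              rw [Matrix.sub_mulVec, Matrix.one_mulVec]
              show ζ (k1, i) - ((MP ⊗ₖ G) *ᵥ ζ) (k1, i) = 0
              rw [hG, kron_diag_mulVec]
              by_cases hij : i = j
              · subst hij
                have hxx : (fun l => ζ (l, i)) = x := by funext l; simp [hζ]
                rw [hxx]
                have h11 : (MP *ᵥ x) k1 = F k1 := by rw [hMP k1, hc0, mul_zero, sub_zero]
                rw [h11]
                simp only [hζ, if_pos rfl]
                have := hwz k1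
                linear_combination this
              · have hxx : (fun l => ζ (l, i)) = 0 := by
                  funext l; simp [hζ, hij]
                rw [hxx, Matrix.mulVec_zero]
                simp [hζ, hij]
            have hPζ : P *ᵥ (QL *ᵥ ζ) = 0 := by
              rw [Matrix.mulVec_mulVec]
              have h12 : P * QL = QL * (1 - MP ⊗ₖ G) := by
                calc P * QL = (QL * QR) * P * QL := by rw [hQLQR, Matrix.one_mul]
                  _ = QL * (QR * (1 - MP ⊗ₖ K)) * QL := by
                      rw [Matrix.mul_assoc QL QR P]
                  _ = QL * ((1 - MP ⊗ₖ G) * QR) * QL := by rw [hconj MP]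
                  _ = QL * (1 - MP ⊗ₖ G) * (QR * QL) := by
                      rw [Matrix.mul_assoc, Matrix.mul_assoc, Matrix.mul_assoc]
                  _ = QL * (1 - MP ⊗ₖ G) := by rw [hQRQL, Matrix.mul_one]
              rw [h12, ← Matrix.mulVec_mulVec, hmv, Matrix.mulVec_zero]
            have h13 : QL *ᵥ ζ = 0 := by
              have h14 := congrArg (fun v => P⁻¹ *ᵥ v) hPζ
              simpa [Matrix.mulVec_mulVec, ← Matrix.mul_assoc, hPP', Matrix.one_mul,
                Matrix.one_mulVec, Matrix.mulVec_zero] using h14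
            apply hζ0
            have h15 := congrArg (fun v => QR *ᵥ v) h13
            simpa [Matrix.mulVec_mulVec, hQRQL, Matrix.one_mulVec, Matrix.mulVec_zero] using h15
          · push_neg at hwz
            obtain ⟨k1, hk1⟩ := hwz
            have h16 : (lam - 1) * (x k1 - γ * F k1) = 0 := by linear_combination - hw k1
            rcases mul_eq_zero.mp h16 with h17 | h17
            · exact sub_eq_zero.mp h17
            · exact absurd h17 hk1
      · -- a ≠ 0
        have h18 : (a:ℂ) = lam * (a:ℂ) := by
          have := hlam
          rw [ht] at this
          push_cast at this
          simpa using this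
        have h19 : (lam - 1) * (a:ℂ) = 0 := by linear_combination - h18
        rcases mul_eq_zero.mp h19 with h20 | h20
        · exact sub_eq_zero.mp h20
        · exact absurd h20 (Complex.ofReal_ne_zero.mpr ha)
    subst hlam1
    have hcenter : (1:ℂ) - 2/(2 - (ω:ℂ)) = -(ω:ℂ)/(2-(ω:ℂ)) := by
      field_simp
      ring
    rw [hcenter, norm_div, norm_neg, Complex.norm_real, Real.norm_eq_abs,
      show (2:ℂ) - (ω:ℂ) = ((2 - ω : ℝ) : ℂ) by push_cast; ring, Complex.norm_real, Real.norm_eq_abs,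
      abs_of_pos hω0, abs_of_pos h2ω]
    exact ⟨le_refl _, hann⟩
  · -- t ≠ 0 : the main annulus estimate
    set den : ℂ := (a:ℂ) - (1-(ω:ℂ)) * (t:ℂ) * Complex.I with hdendef
    have himden : den.im = -((1-ω)*t) := by
      rw [hdendef]
      simp [Complex.sub_im, Complex.mul_im, Complex.mul_re, Complex.sub_re, Complex.I_im,
        Complex.I_re, Complex.ofReal_re, Complex.ofReal_im]
    have hden0 : den ≠ 0 := by
      intro h
      have h21 : -((1-ω)*t) = 0 := by rw [← himden, h, Complex.zero_im]
      have h22 : (1-ω)*t ≠ 0 := mul_ne_zero (ne_of_gt h1ω) ht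
      exact h22 (by linarith [neg_eq_zero.mp h21])
    have hlam2 : lam = ((a:ℂ) - (t:ℂ) * Complex.I) / den := by
      rw [eq_div_iff hden0]
      exact hlam.symm
    have hkey : lam - 2/(2-(ω:ℂ))
        = (-(ω:ℂ)) * ((a:ℂ) + (t:ℂ) * Complex.I) / ((2-(ω:ℂ)) * den) := by
      rw [hlam2]
      field_simp
      rw [hdendef]
      ring
    have habs : ‖lam - 2/(2-(ω:ℂ))‖
        = ω * ‖(a:ℂ) + (t:ℂ) * Complex.I‖ / ((2-ω) * ‖den‖) := by
      rw [hkey, norm_div, norm_mul, norm_mul, norm_neg, Complex.norm_real, Real.norm_eq_abs, abs_of_pos hω0,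
        show (2:ℂ)-(ω:ℂ) = ((2-ω:ℝ):ℂ) by push_cast; ring, Complex.norm_real, Real.norm_eq_abs, abs_of_pos h2ω]
    have habs1 : ‖(a:ℂ) + (t:ℂ) * Complex.I‖ = Real.sqrt (a^2 + t^2) := by
      rw [Complex.norm_def]
      congr 1
      simp [Complex.normSq_apply, Complex.add_re, Complex.add_im, Complex.mul_re, Complex.mul_im,
        Complex.I_re, Complex.I_im, Complex.ofReal_re, Complex.ofReal_im]
      ring
    have habs2 : ‖den‖ = Real.sqrt (a^2 + ((1-ω)*t)^2) := by
      rw [Complex.norm_def]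
      congr 1
      rw [hdendef]
      simp [Complex.normSq_apply, Complex.sub_re, Complex.sub_im, Complex.mul_re, Complex.mul_im,
        Complex.I_re, Complex.I_im, Complex.ofReal_re, Complex.ofReal_im]
      ring
    rw [habs, habs1, habs2]
    exact annulus_est ω a t hω0 hω1 ht
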